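/- Let M be a compact Hausdorff topological space and let X = C(M, ℝ) be the Banach space of continuous real-valued functions on M with the supremum norm. Let h : ℝ → ℝ be a C^∞ function with bounded support that equals 1 on a neighborhood of 0, with h and all its derivatives bounded. Then the map H : X → X defined by H(x)(t) = h(x(t))·x(t) is a C^∞ K-map on X (it coincides with the identity on a neighborhood of 0 and is bounded), and all of its iterated Fréchet derivatives are bounded on X. -/

import Mathlib

open Filter Asymptotics

set_option linter.unusedSectionVars false
set_option maxHeartbeats 1000000

section KMapAux

/-! ### Scalar calculus lemmas -/

private lemma scalar_lip' {g : ℝ → ℝ} (hg : Differentiable ℝ g) {C : ℝ}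
    (hC : ∀ s, |deriv g s| ≤ C) (a b : ℝ) : |g a - g b| ≤ C * |a - b| := by
  have h0 : (0:ℝ) ≤ C := le_trans (abs_nonneg _) (hC 0)
  have hl : LipschitzWith (⟨C, h0⟩ : NNReal) g := by
    apply lipschitzWith_of_nnnorm_deriv_le hg
    intro x
    exact NNReal.coe_le_coe.mp (by rw [coe_nnnorm, Real.norm_eq_abs]; exact hC x)
  have := hl.dist_le_mul a b
  rw [Real.dist_eq, Real.dist_eq] at this
  exact this

private lemma deriv_contDiff' {g : ℝ → ℝ} (hg : ContDiff ℝ (⊤:ℕ∞) g) :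
    ContDiff ℝ (⊤:ℕ∞) (deriv g) := by
  have := contDiff_infty_iff_deriv.mp (by exact_mod_cast hg)
  exact_mod_cast this.2

private lemma taylor_est' {g : ℝ → ℝ} (hg : ContDiff ℝ (⊤:ℕ∞) g) {C : ℝ}
    (hC : ∀ s, |deriv (deriv g) s| ≤ C) (a u : ℝ) :
    |g (a + u) - g a - deriv g a * u| ≤ C * (|u| * |u|) := by
  have h0 : (0:ℝ) ≤ C := le_trans (abs_nonneg _) (hC 0)
  have hg' : ContDiff ℝ (⊤:ℕ∞) (deriv g) := deriv_contDiff' hg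
  have hdg : Differentiable ℝ g := hg.differentiable (by simp)
  have hdg' : Differentiable ℝ (deriv g) := hg'.differentiable (by simp)
  have lip : ∀ s b, |deriv g s - deriv g b| ≤ C * |s - b| := scalar_lip' hdg' hC
  set φ : ℝ → ℝ := fun τ => g (a + τ * u) - deriv g a * (τ * u) with hφ
  have hd : ∀ τ : ℝ, HasDerivAt φ ((deriv g (a + τ * u) - deriv g a) * u) τ := by
    intro τ
    have h1 : HasDerivAt (fun τ : ℝ => a + τ * u) u τ := by
      simpa using ((hasDerivAt_id τ).mul_const u).const_add a
    have h2 : HasDerivAt (fun τ : ℝ => g (a + τ * u)) (deriv g (a + τ * u) * u) τ :=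
      (hdg _).hasDerivAt.comp τ h1
    have h3 : HasDerivAt (fun τ : ℝ => deriv g a * (τ * u)) (deriv g a * u) τ := by
      simpa [mul_assoc] using (((hasDerivAt_id τ).mul_const u).const_mul (deriv g a))
    rw [sub_mul]; exact h2.sub h3
  have bound : ∀ τ ∈ Set.Ico (0:ℝ) 1,
      ‖(deriv g (a + τ * u) - deriv g a) * u‖ ≤ C * (|u| * |u|) := by
    intro τ hτ
    rw [Real.norm_eq_abs, abs_mul]
    have h1 : |deriv g (a + τ * u) - deriv g a| ≤ C * |τ * u| := by simpa using lip (a + τ*u) a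
    have h2 : |τ * u| ≤ |u| := by
      rw [abs_mul]
      have : |τ| ≤ 1 := by rw [abs_of_nonneg hτ.1]; exact hτ.2.le
      nlinarith [abs_nonneg u, abs_nonneg τ]
    calc |deriv g (a + τ * u) - deriv g a| * |u| ≤ (C * |τ * u|) * |u| :=
          mul_le_mul_of_nonneg_right h1 (abs_nonneg u)
      _ ≤ C * (|u| * |u|) := by
          rw [mul_assoc]
          exact mul_le_mul_of_nonneg_left (mul_le_mul_of_nonneg_right h2 (abs_nonneg u)) h0
  have key := norm_image_sub_le_of_norm_deriv_le_segment' (a := (0:ℝ)) (b := 1)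
      (f := φ) (f' := fun τ => (deriv g (a + τ * u) - deriv g a) * u)
      (C := C * (|u| * |u|))
      (fun τ _ => (hd τ).hasDerivWithinAt) bound 1 (by norm_num)
  have e : φ 1 - φ 0 = g (a + u) - g a - deriv g a * u := by simp [hφ]; ring
  rw [e, Real.norm_eq_abs] at key
  linarith

private lemma bnd_deriv' {g : ℝ → ℝ}
    (hb : ∀ k : ℕ, ∃ C : ℝ, ∀ s : ℝ, |iteratedDeriv k g s| ≤ C) :
    ∀ k : ℕ, ∃ C : ℝ, ∀ s : ℝ, |iteratedDeriv k (deriv g) s| ≤ C := by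
  intro k
  obtain ⟨C, hC⟩ := hb (k + 1)
  exact ⟨C, fun s => by rw [← iteratedDeriv_succ']; exact hC s⟩

private lemma bnd_two' {g : ℝ → ℝ}
    (hb : ∀ k : ℕ, ∃ C : ℝ, ∀ s : ℝ, |iteratedDeriv k g s| ≤ C) :
    ∃ C : ℝ, ∀ s : ℝ, |deriv (deriv g) s| ≤ C := by
  obtain ⟨C, hC⟩ := hb 2
  refine ⟨C, fun s => ?_⟩
  have e : iteratedDeriv 2 g = deriv (deriv g) := by
    rw [iteratedDeriv_succ, iteratedDeriv_one]
  rw [← e]; exact hC s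

/-! ### The superposition (Nemytskii) operator on `C(M, ℝ)` -/

variable {M : Type*} [TopologicalSpace M] [CompactSpace M] [T2Space M]

/-- Superposition operator `x ↦ g ∘ x` on `C(M, ℝ)`. -/
private noncomputable def nem (g : ℝ → ℝ) (hgc : Continuous g) (x : C(M, ℝ)) : C(M, ℝ) :=
  (ContinuousMap.mk g hgc).comp x

private lemma nem_hasFDerivAt {g : ℝ → ℝ} (hg : ContDiff ℝ (⊤:ℕ∞) g)
    (hgc : Continuous g) (hg'c : Continuous (deriv g)) {C : ℝ}
    (hC : ∀ s, |deriv (deriv g) s| ≤ C) (x : C(M, ℝ)) :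
    HasFDerivAt (nem g hgc)
      (ContinuousLinearMap.mul ℝ C(M,ℝ) (nem (deriv g) hg'c x)) x := by
  have h0 : (0:ℝ) ≤ C := le_trans (abs_nonneg _) (hC 0)
  rw [hasFDerivAt_iff_isLittleO_nhds_zero]
  have key : ∀ v : C(M,ℝ),
      ‖nem g hgc (x + v) - nem g hgc x
        - ContinuousLinearMap.mul ℝ C(M,ℝ) (nem (deriv g) hg'c x) v‖ ≤ C * (‖v‖ * ‖v‖) := by
    intro v
    rw [ContinuousMap.norm_le _ (by positivity)]
    intro t
    have e : (nem g hgc (x + v) - nem g hgc x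
        - ContinuousLinearMap.mul ℝ C(M,ℝ) (nem (deriv g) hg'c x) v) t
        = g (x t + v t) - g (x t) - deriv g (x t) * v t := by
      simp [nem, ContinuousLinearMap.mul_apply']
    rw [e, Real.norm_eq_abs]
    refine le_trans (taylor_est' hg hC (x t) (v t)) ?_
    have hv : |v t| ≤ ‖v‖ := by
      rw [← Real.norm_eq_abs]; exact v.norm_coe_le_norm t
    have hvv : |v t| * |v t| ≤ ‖v‖ * ‖v‖ :=
      mul_le_mul hv hv (abs_nonneg _) (norm_nonneg _)
    exact mul_le_mul_of_nonneg_left hvv h0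
  have h1 : (fun v : C(M,ℝ) => nem g hgc (x + v) - nem g hgc x
      - ContinuousLinearMap.mul ℝ C(M,ℝ) (nem (deriv g) hg'c x) v)
      =O[nhds 0] fun v : C(M,ℝ) => ‖v‖ ^ 2 := by
    apply IsBigO.of_bound C
    filter_upwards with v
    rw [Real.norm_eq_abs, abs_of_nonneg (by positivity), pow_two]
    exact key v
  have h2 : (fun v : C(M,ℝ) => ‖v‖ ^ 2) =o[nhds 0] fun v : C(M,ℝ) => v :=
    isLittleO_norm_pow_id one_lt_two
  exact h1.trans_isLittleO h2

private lemma nem_fderiv {g : ℝ → ℝ} (hg : ContDiff ℝ (⊤:ℕ∞) g)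
    (hb : ∀ k : ℕ, ∃ C : ℝ, ∀ s : ℝ, |iteratedDeriv k g s| ≤ C) :
    fderiv ℝ (nem (M := M) g hg.continuous)
      = fun x => ContinuousLinearMap.mul ℝ C(M,ℝ)
          (nem (deriv g) (deriv_contDiff' hg).continuous x) := by
  obtain ⟨C, hC⟩ := bnd_two' hb
  exact funext fun x =>
    (nem_hasFDerivAt hg hg.continuous (deriv_contDiff' hg).continuous hC x).fderiv

private lemma nem_contDiff : ∀ (n : ℕ) (g : ℝ → ℝ) (hg : ContDiff ℝ (⊤:ℕ∞) g),
    (∀ k : ℕ, ∃ C : ℝ, ∀ s : ℝ, |iteratedDeriv k g s| ≤ C) →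
    ContDiff ℝ (n : ℕ∞) (nem (M := M) g hg.continuous) := by
  intro n
  induction n with
  | zero =>
    intro g hg hb
    obtain ⟨C, hC⟩ := bnd_two' hb
    have hcont : Continuous (nem (M := M) g hg.continuous) := by
      rw [continuous_iff_continuousAt]
      exact fun x =>
        (nem_hasFDerivAt hg hg.continuous (deriv_contDiff' hg).continuous hC x).continuousAt
    exact_mod_cast contDiff_zero.mpr hcont
  | succ n ih =>
    intro g hg hb
    obtain ⟨C, hC⟩ := bnd_two' hb
    have hdiff : Differentiable ℝ (nem (M := M) g hg.continuous) := fun x =>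
      (nem_hasFDerivAt hg hg.continuous (deriv_contDiff' hg).continuous hC x).differentiableAt
    have e1 : ((n + 1 : ℕ) : ℕ∞) = (n : ℕ∞) + 1 := by push_cast; rfl
    rw [e1]
    rw [show (((n : ℕ∞) + 1 : ℕ∞) : WithTop ℕ∞) = ((n : ℕ∞) : WithTop ℕ∞) + 1 by push_cast; rfl]
    rw [contDiff_succ_iff_fderiv]
    refine ⟨hdiff, by simp, ?_⟩
    rw [nem_fderiv hg hb]
    have hlin : ContDiff ℝ ((n:ℕ∞) : WithTop ℕ∞)
        (fun y : C(M,ℝ) => ContinuousLinearMap.mul ℝ C(M,ℝ) y) := by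
      fun_prop
    exact hlin.comp (ih (deriv g) (deriv_contDiff' hg) (bnd_deriv' hb))

private lemma nem_bound : ∀ (n : ℕ) (g : ℝ → ℝ) (hg : ContDiff ℝ (⊤:ℕ∞) g),
    (∀ k : ℕ, ∃ C : ℝ, ∀ s : ℝ, |iteratedDeriv k g s| ≤ C) →
    ∃ C : ℝ, ∀ x : C(M,ℝ), ‖iteratedFDeriv ℝ n (nem (M := M) g hg.continuous) x‖ ≤ C := by
  intro n
  induction n with
  | zero =>
    intro g hg hb
    obtain ⟨C, hC⟩ := hb 0
    simp only [iteratedDeriv_zero] at hC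
    refine ⟨max C 0, fun x => ?_⟩
    rw [norm_iteratedFDeriv_zero]
    rw [ContinuousMap.norm_le _ (le_max_right _ _)]
    intro t
    exact le_trans (by simpa [nem, Real.norm_eq_abs] using hC (x t)) (le_max_left _ _)
  | succ n ih =>
    intro g hg hb
    obtain ⟨C, hC⟩ := ih (deriv g) (deriv_contDiff' hg) (bnd_deriv' hb)
    refine ⟨max C 0, fun x => ?_⟩
    rw [← norm_iteratedFDeriv_fderiv, nem_fderiv hg hb]
    have hcomp : (fun x => ContinuousLinearMap.mul ℝ C(M,ℝ)
          (nem (deriv g) (deriv_contDiff' hg).continuous x))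
        = (ContinuousLinearMap.mul ℝ C(M,ℝ)) ∘ (nem (deriv g) (deriv_contDiff' hg).continuous) :=
      rfl
    rw [hcomp, ContinuousLinearMap.iteratedFDeriv_comp_left _
      ((nem_contDiff n (deriv g) (deriv_contDiff' hg) (bnd_deriv' hb)).contDiffAt (x := x)) le_rfl]
    refine le_trans (ContinuousLinearMap.norm_compContinuousMultilinearMap_le _ _) ?_
    have h1 : ‖ContinuousLinearMap.mul ℝ C(M,ℝ)‖ ≤ 1 := ContinuousLinearMap.opNorm_mul_le ℝ _
    calc ‖ContinuousLinearMap.mul ℝ C(M,ℝ)‖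
          * ‖iteratedFDeriv ℝ n (nem (deriv g) (deriv_contDiff' hg).continuous) x‖
        ≤ 1 * C := mul_le_mul h1 (hC x) (norm_nonneg _) zero_le_one
      _ ≤ max C 0 := by simp

end KMapAux

/-- On `X = C(M, ℝ)` (`M` compact Hausdorff, sup norm), for a `C^∞` function `h : ℝ → ℝ`
with bounded support, equal to `1` near `0`, with all derivatives bounded, the map
`H x = (t ↦ h (x t) * x t)` is a `C^∞` K-map on `X` with all iterated Fréchet derivatives
bounded. -/
theorem CM_KMap
    {M : Type*} [TopologicalSpace M] [CompactSpace M] [T2Space M]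
    (h : ℝ → ℝ) (hh : ContDiff ℝ (⊤ : ℕ∞) h)
    (hh1 : ∀ᶠ s in nhds (0 : ℝ), h s = 1)
    (hhsupp : ∃ r : ℝ, ∀ s : ℝ, r ≤ |s| → h s = 0)
    (hhder : ∀ n : ℕ, ∃ C : ℝ, ∀ s : ℝ, |iteratedDeriv n h s| ≤ C)
    (H : C(M, ℝ) → C(M, ℝ)) (hHdef : ∀ (x : C(M, ℝ)) (t : M), H x t = h (x t) * x t) :
    ContDiff ℝ (⊤ : ℕ∞) H ∧ (∀ᶠ x in nhds (0 : C(M, ℝ)), H x = x) ∧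
      (∃ C : ℝ, ∀ x, ‖H x‖ ≤ C) ∧
      ∀ n : ℕ, ∃ C : ℝ, ∀ x, ‖iteratedFDeriv ℝ n H x‖ ≤ C := by
  classical
  set g : ℝ → ℝ := fun s => h s * s with hgdef
  have hgsm : ContDiff ℝ (⊤ : ℕ∞) g := hh.mul contDiff_id
  -- H agrees with the superposition operator of g
  have hHeq : H = nem g hgsm.continuous := by
    funext x
    ext t
    rw [hHdef]
    rfl
  -- g has compact support
  obtain ⟨r, hr⟩ := hhsupp
  have hgsupp : HasCompactSupport g := by
    apply HasCompactSupport.intro (isCompact_closedBall (0:ℝ) (max r 0))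
    intro s hs
    have : max r 0 < |s| := by
      simpa [Metric.mem_closedBall, Real.dist_eq, not_le] using hs
    have hrs : r ≤ |s| := le_of_lt (lt_of_le_of_lt (le_max_left _ _) this)
    simp [hgdef, hr s hrs]
  -- all iterated derivatives of g have compact support
  have hcs : ∀ k : ℕ, HasCompactSupport (iteratedDeriv k g) := by
    intro k
    induction k with
    | zero => simpa [iteratedDeriv_zero] using hgsupp
    | succ k ih => rw [iteratedDeriv_succ]; exact ih.deriv
  -- hence all iterated derivatives of g are bounded
  have hb : ∀ k : ℕ, ∃ C : ℝ, ∀ s : ℝ, |iteratedDeriv k g s| ≤ C := by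
    intro k
    obtain ⟨C, hC⟩ := (hcs k).exists_bound_of_continuous
      (hgsm.continuous_iteratedDeriv k (by exact_mod_cast le_top))
    exact ⟨C, fun s => by simpa [Real.norm_eq_abs] using hC s⟩
  refine ⟨?_, ?_, ?_, ?_⟩
  · -- smoothness
    rw [hHeq]
    have : ∀ n : ℕ, ContDiff ℝ (n : ℕ∞) (nem (M := M) g hgsm.continuous) := fun n =>
      nem_contDiff n g hgsm hb
    exact_mod_cast contDiff_infty.mpr (by exact_mod_cast this)
  · -- identity near 0
    obtain ⟨ε, hε, hball⟩ := Metric.eventually_nhds_iff.mp hh1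
    rw [Metric.eventually_nhds_iff]
    refine ⟨ε, hε, fun x hx => ?_⟩
    ext t
    rw [hHdef]
    have hxt : dist (x t) 0 < ε := by
      rw [Real.dist_eq, sub_zero]
      calc |x t| ≤ ‖x‖ := by rw [← Real.norm_eq_abs]; exact x.norm_coe_le_norm t
        _ < ε := by rwa [← dist_zero_right]
    rw [hball hxt, one_mul]
  · -- global bound
    obtain ⟨C, hC⟩ := hb 0
    simp only [iteratedDeriv_zero] at hC
    refine ⟨max C 0, fun x => ?_⟩
    rw [ContinuousMap.norm_le _ (le_max_right _ _)]
    intro t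
    rw [hHdef]
    exact le_trans (by rw [Real.norm_eq_abs]; exact hC (x t)) (le_max_left _ _)
  · -- bounded iterated derivatives
    intro n
    rw [hHeq]
    exact nem_bound n g hgsm hb
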